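/- For every prime p > 5 and every n ≥ 1, s with 0 ≤ 2s ≤ 5n, the rational number 5^{−2s}·(3/5)_n·(4/5)_n·(1/5)_{3n−s} / (s!·(5n−2s)!) is a p-adic integer, where (a)_m = a(a+1)⋯(a+m−1) denotes the ascending Pochhammer symbol. -/

import Mathlib

open Finset


private lemma count_lb (m q r a : ℕ) (hq : 0 < q) (ha : a < q) (hd : q ∣ 5*a + r) :
    (m + q - 1 - a) / q ≤ ((Finset.range m).filter (fun i => q ∣ 5*i + r)).card := by
  classical
  set T := (m + q - 1 - a) / q with hT
  have hdm := Nat.div_add_mod (m + q - 1 - a) q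
  rw [← hT] at hdm
  have key : ∀ t, t < T → a + q*t < m := by
    intro t ht
    have h3 : q*(t+1) ≤ q*T := Nat.mul_le_mul_left q (by omega)
    rw [Nat.mul_add] at h3
    omega
  have hinj : Set.InjOn (fun t => a + q*t) (Finset.range T) := by
    intro t1 _ t2 _ h
    simp only at h
    exact Nat.eq_of_mul_eq_mul_left hq (by omega)
  have hmaps : ∀ t ∈ Finset.range T,
      (fun t => a + q*t) t ∈ (Finset.range m).filter (fun i => q ∣ 5*i + r) := by
    intro t ht
    simp only [Finset.mem_range] at ht
    simp only [Finset.mem_filter, Finset.mem_range]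
    refine ⟨key t ht, ?_⟩
    have : 5*(a + q*t) + r = (5*a + r) + q*(5*t) := by ring
    rw [this]
    exact Nat.dvd_add hd (Dvd.intro _ rfl)
  have := Finset.card_le_card_of_injOn _ hmaps hinj
  simpa using this

private lemma val_eq_sum (p x B : ℕ) (hp : p.Prime) (hx : 0 < x) (hxB : x ≤ B) :
    padicValNat p x = ∑ j ∈ Finset.Ico 1 B, (if p ^ j ∣ x then 1 else 0) := by
  classical
  set v := padicValNat p x with hv
  have hvlt : v < B := by
    have hpv : p ^ v ∣ x := pow_padicValNat_dvd
    have h1 : p ^ v ≤ x := Nat.le_of_dvd hx hpv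
    have h2 : v < p ^ v := Nat.lt_pow_self (n := v) hp.one_lt
    omega
  have hiff : ∀ j, p ^ j ∣ x ↔ j ≤ v := by
    intro j
    rw [hv, ← Nat.factorization_def x hp]
    exact hp.pow_dvd_iff_le_factorization (by omega)
  calc v = (Finset.Ico 1 (v+1)).card := by simp
    _ = ((Finset.Ico 1 B).filter (fun j => p ^ j ∣ x)).card := by
        congr 1
        ext j
        simp only [Finset.mem_Ico, Finset.mem_filter, hiff]
        omega
    _ = ∑ j ∈ Finset.Ico 1 B, (if p ^ j ∣ x then 1 else 0) := by
        simp [Finset.sum_boole]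

private lemma val_prod (p : ℕ) (hp : p.Prime) (m r B : ℕ) (hr : 0 < r) (hB : 5*m + r ≤ B) :
    padicValNat p (∏ i ∈ Finset.range m, (5*i + r))
      = ∑ j ∈ Finset.Ico 1 B, (((Finset.range m).filter (fun i => p ^ j ∣ 5*i + r)).card) := by
  classical
  have hne : ∀ i ∈ Finset.range m, 5*i + r ≠ 0 := by intro i _; omega
  have hfac := Nat.factorization_prod (S := Finset.range m) (g := fun i => 5*i + r) hne
  have h1 : padicValNat p (∏ i ∈ Finset.range m, (5*i + r))
      = ∑ i ∈ Finset.range m, padicValNat p (5*i + r) := by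
    rw [← Nat.factorization_def _ hp, hfac]
    simp only [Finsupp.finset_sum_apply]
    exact Finset.sum_congr rfl fun i _ => Nat.factorization_def _ hp
  rw [h1]
  have h2 : ∀ i ∈ Finset.range m, padicValNat p (5*i + r)
      = ∑ j ∈ Finset.Ico 1 B, (if p ^ j ∣ 5*i + r then 1 else 0) := by
    intro i hi
    simp only [Finset.mem_range] at hi
    exact val_eq_sum p _ B hp (by omega) (by omega)
  rw [Finset.sum_congr rfl h2, Finset.sum_comm]
  exact Finset.sum_congr rfl fun j _ => by simp [Finset.sum_boole]

private lemma exists_res (q r : ℕ) (hq : 7 ≤ q) (hq5 : q % 5 ≠ 0)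
    (hr : r = 1 ∨ r = 3 ∨ r = 4) : ∃ a, a < q ∧ q ∣ 5 * a + r := by
  have h5 : q % 5 = 1 ∨ q % 5 = 2 ∨ q % 5 = 3 ∨ q % 5 = 4 := by omega
  rcases hr with rfl | rfl | rfl <;> rcases h5 with h | h | h | h
  · exact ⟨(1*q - 1)/5, by omega, ⟨1, by omega⟩⟩
  · exact ⟨(3*q - 1)/5, by omega, ⟨3, by omega⟩⟩
  · exact ⟨(2*q - 1)/5, by omega, ⟨2, by omega⟩⟩
  · exact ⟨(4*q - 1)/5, by omega, ⟨4, by omega⟩⟩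
  · exact ⟨(3*q - 3)/5, by omega, ⟨3, by omega⟩⟩
  · exact ⟨(4*q - 3)/5, by omega, ⟨4, by omega⟩⟩
  · exact ⟨(1*q - 3)/5, by omega, ⟨1, by omega⟩⟩
  · exact ⟨(2*q - 3)/5, by omega, ⟨2, by omega⟩⟩
  · exact ⟨(4*q - 4)/5, by omega, ⟨4, by omega⟩⟩
  · exact ⟨(2*q - 4)/5, by omega, ⟨2, by omega⟩⟩
  · exact ⟨(3*q - 4)/5, by omega, ⟨3, by omega⟩⟩
  · exact ⟨(1*q - 4)/5, by omega, ⟨1, by omega⟩⟩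


private lemma red34 {q n N b a T r D : ℕ} (h3 : a < q)
    (hN : q * N + b = n) (hT : q * T + r = n + q - 1 - a)
    (hm : q * T = q * N + q * D) : q * D + r + a = b + q - 1 := by omega

private lemma red1 {q n s N S b cc a1 T1 r1 E1 : ℕ} (h1 : a1 < q)
    (hs : 2*s ≤ 5*n)
    (hN : q * N + b = n) (hS : q * S + cc = s)
    (hT1 : q * T1 + r1 = 3*n - s + q - 1 - a1)
    (hm1 : q * T1 + q * S + q * 1 = 3 * (q * N) + q * E1) :
    q * E1 + r1 + cc + a1 = 3*b + 2*q - 1 := by omega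

private lemma redM {q n s N S b cc TM rM EM : ℕ}
    (hs : 2*s ≤ 5*n)
    (hN : q * N + b = n) (hS : q * S + cc = s)
    (hTM : q * TM + rM = 5*n - 2*s)
    (hmM : q * TM + 2 * (q * S) + q * 2 = 5 * (q * N) + q * EM) :
    q * EM + rM + 2*cc = 5*b + 2*q := by omega

private lemma redgoal {N S D3 D4 E1 EM T3 T4 T1 TM : ℕ}
    (hD3 : T3 = N + D3) (hD4 : T4 = N + D4)
    (hE1 : T1 + S + 1 = 3*N + E1) (hEM : TM + 2*S + 2 = 5*N + EM)
    (h : EM ≤ D3 + D4 + E1 + 1) : S + TM ≤ T3 + T4 + T1 := by omega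

set_option maxHeartbeats 4000000 in
theorem core (q n s a1 a3 a4 : ℕ) (hq : 7 ≤ q)
    (h1 : a1 < q) (h3 : a3 < q) (h4 : a4 < q)
    (d1 : q ∣ 5*a1 + 1) (d3 : q ∣ 5*a3 + 3) (d4 : q ∣ 5*a4 + 4)
    (hn : 1 ≤ n) (hs : 2*s ≤ 5*n) :
    s / q + (5*n - 2*s) / q
      ≤ (n + q - 1 - a3) / q + (n + q - 1 - a4) / q + (3*n - s + q - 1 - a1) / q := by
  have hq0 : 0 < q := by omega
  obtain ⟨c1, hc1⟩ := d1
  obtain ⟨c3, hc3⟩ := d3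
  obtain ⟨c4, hc4⟩ := d4
  have hc1b : c1 = 1 ∨ c1 = 2 ∨ c1 = 3 ∨ c1 = 4 := by
    have h0 : c1 ≠ 0 := by rintro rfl; simp at hc1
    have h5 : ¬ 5 ≤ c1 := fun h => by
      have : q * 5 ≤ q * c1 := Nat.mul_le_mul_left q h
      omega
    omega
  have hc3b : c3 = 1 ∨ c3 = 2 ∨ c3 = 3 ∨ c3 = 4 := by
    have h0 : c3 ≠ 0 := by rintro rfl; simp at hc3
    have h5 : ¬ 5 ≤ c3 := fun h => by
      have : q * 5 ≤ q * c3 := Nat.mul_le_mul_left q h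
      omega
    omega
  have hc4b : c4 = 1 ∨ c4 = 2 ∨ c4 = 3 ∨ c4 = 4 := by
    have h0 : c4 ≠ 0 := by rintro rfl; simp at hc4
    have h5 : ¬ 5 ≤ c4 := fun h => by
      have : q * 5 ≤ q * c4 := Nat.mul_le_mul_left q h
      omega
    omega
  obtain ⟨N, b, hN, hb⟩ : ∃ N b, q * N + b = n ∧ b < q :=
    ⟨n / q, n % q, Nat.div_add_mod n q, Nat.mod_lt _ hq0⟩
  set S := s / q with hSdef
  set cc := s % q with hccdef
  have hS : q * S + cc = s := Nat.div_add_mod s q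
  have hcclt : cc < q := Nat.mod_lt _ hq0
  set T3 := (n + q - 1 - a3) / q with hT3def
  set r3 := (n + q - 1 - a3) % q with hr3def
  have hT3 : q * T3 + r3 = n + q - 1 - a3 := Nat.div_add_mod _ _
  have hr3 : r3 < q := Nat.mod_lt _ hq0
  set T4 := (n + q - 1 - a4) / q with hT4def
  set r4 := (n + q - 1 - a4) % q with hr4def
  have hT4 : q * T4 + r4 = n + q - 1 - a4 := Nat.div_add_mod _ _
  have hr4 : r4 < q := Nat.mod_lt _ hq0
  set T1 := (3*n - s + q - 1 - a1) / q with hT1def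
  set r1 := (3*n - s + q - 1 - a1) % q with hr1def
  have hT1 : q * T1 + r1 = 3*n - s + q - 1 - a1 := Nat.div_add_mod _ _
  have hr1 : r1 < q := Nat.mod_lt _ hq0
  set TM := (5*n - 2*s) / q with hTMdef
  set rM := (5*n - 2*s) % q with hrMdef
  have hTM : q * TM + rM = 5*n - 2*s := Nat.div_add_mod _ _
  have hrM : rM < q := Nat.mod_lt _ hq0
  clear_value S cc T3 r3 T4 r4 T1 r1 TM rM
  clear hT3def hr3def hT4def hr4def hT1def hr1def hTMdef hrMdef hSdef hccdef
  -- bounds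
  have bT3u : T3 < N + 2 := Nat.lt_of_mul_lt_mul_left (a := q)
    (by rw [Nat.mul_add]; omega)
  have bT3l : N < T3 + 1 := Nat.lt_of_mul_lt_mul_left (a := q)
    (by rw [Nat.mul_add]; omega)
  have bT4u : T4 < N + 2 := Nat.lt_of_mul_lt_mul_left (a := q)
    (by rw [Nat.mul_add]; omega)
  have bT4l : N < T4 + 1 := Nat.lt_of_mul_lt_mul_left (a := q)
    (by rw [Nat.mul_add]; omega)
  have bT1l : 3*N < T1 + S + 2 := Nat.lt_of_mul_lt_mul_left (a := q)
    (by rw [Nat.mul_left_comm, Nat.mul_add, Nat.mul_add]; omega)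
  have bT1u : T1 + S + 1 < 3*N + 5 := Nat.lt_of_mul_lt_mul_left (a := q)
    (by rw [Nat.mul_add, Nat.mul_add, Nat.mul_add, Nat.mul_left_comm]; omega)
  have bTMl : 5*N < TM + 2*S + 3 := Nat.lt_of_mul_lt_mul_left (a := q)
    (by rw [Nat.mul_left_comm, Nat.mul_add, Nat.mul_add, Nat.mul_left_comm q 2 S]; omega)
  have bTMu : TM + 2*S < 5*N + 5 := Nat.lt_of_mul_lt_mul_left (a := q)
    (by rw [Nat.mul_add, Nat.mul_add, Nat.mul_left_comm q 2 S, Nat.mul_left_comm q 5 N]; omega)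
  -- offset variables
  obtain ⟨D3, hD3, hD3b⟩ : ∃ d, T3 = N + d ∧ (d = 0 ∨ d = 1) := ⟨T3 - N, by omega, by omega⟩
  obtain ⟨D4, hD4, hD4b⟩ : ∃ d, T4 = N + d ∧ (d = 0 ∨ d = 1) := ⟨T4 - N, by omega, by omega⟩
  obtain ⟨E1, hE1, hE1b⟩ : ∃ e, T1 + S + 1 = 3*N + e ∧
      (e = 0 ∨ e = 1 ∨ e = 2 ∨ e = 3 ∨ e = 4) :=
    ⟨T1 + S + 1 - 3*N, by omega, by omega⟩
  obtain ⟨EM, hEM, hEMb⟩ : ∃ e, TM + 2*S + 2 = 5*N + e ∧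
      (e = 0 ∨ e = 1 ∨ e = 2 ∨ e = 3 ∨ e = 4 ∨ e = 5 ∨ e = 6) :=
    ⟨TM + 2*S + 2 - 5*N, by omega, by omega⟩
  -- multiplied versions
  have hm3 : q * T3 = q * N + q * D3 := by rw [hD3, Nat.mul_add]
  have hm4 : q * T4 = q * N + q * D4 := by rw [hD4, Nat.mul_add]
  have hm1 : q * T1 + q * S + q * 1 = 3 * (q * N) + q * E1 := by
    rw [← Nat.mul_add, ← Nat.mul_add, hE1, Nat.mul_add, Nat.mul_left_comm]
  have hmM : q * TM + 2 * (q * S) + q * 2 = 5 * (q * N) + q * EM := by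
    rw [Nat.mul_left_comm 2 q S, ← Nat.mul_add, ← Nat.mul_add, hEM, Nat.mul_add,
      Nat.mul_left_comm]
  -- reduced equations
  have e3 : q * D3 + r3 + a3 = b + q - 1 := red34 h3 hN hT3 hm3
  have e4 : q * D4 + r4 + a4 = b + q - 1 := red34 h4 hN hT4 hm4
  have e1 : q * E1 + r1 + cc + a1 = 3*b + 2*q - 1 := red1 h1 hs hN hS hT1 hm1
  have eM : q * EM + rM + 2*cc = 5*b + 2*q := redM hs hN hS hTM hmM
  refine redgoal hD3 hD4 hE1 hEM ?_
  have f3 : q*D3 + a3 ≤ b + q - 1 ∧ b + q - 1 ≤ q*D3 + a3 + (q-1) := by omega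
  have f4 : q*D4 + a4 ≤ b + q - 1 ∧ b + q - 1 ≤ q*D4 + a4 + (q-1) := by omega
  have f1 : q*E1 + cc + a1 ≤ 3*b + 2*q - 1 ∧ 3*b + 2*q - 1 ≤ q*E1 + cc + a1 + (q-1) := by
    omega
  have fM : q*EM + 2*cc ≤ 5*b + 2*q ∧ 5*b + 2*q ≤ q*EM + 2*cc + (q-1) := by omega
  obtain ⟨f3a, f3b⟩ := f3
  obtain ⟨f4a, f4b⟩ := f4
  obtain ⟨f1a, f1b⟩ := f1
  obtain ⟨fMa, fMb⟩ := fM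
  clear hm3 hm4 hm1 hmM hT3 hT4 hT1 hTM hN hS hD3 hD4 hE1 hEM
    bT3u bT3l bT4u bT4l bT1l bT1u bTMl bTMu hn hs e3 e4 e1 eM hr3 hr4 hr1 hrM
  clear n s N S T3 T4 T1 TM r3 r4 r1 rM
  rcases hc1b with rfl | rfl | rfl | rfl
  · have h53 : c3 = 3 := by rcases hc3b with rfl | rfl | rfl | rfl <;> omega
    have h54 : c4 = 4 := by rcases hc4b with rfl | rfl | rfl | rfl <;> omega
    subst h53; subst h54
    rcases hD3b with rfl | rfl <;> rcases hD4b with rfl | rfl <;>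
      rcases hE1b with rfl | rfl | rfl | rfl | rfl <;>
      rcases hEMb with rfl | rfl | rfl | rfl | rfl | rfl | rfl <;> omega
  · have h53 : c3 = 1 := by rcases hc3b with rfl | rfl | rfl | rfl <;> omega
    have h54 : c4 = 3 := by rcases hc4b with rfl | rfl | rfl | rfl <;> omega
    subst h53; subst h54
    rcases hD3b with rfl | rfl <;> rcases hD4b with rfl | rfl <;>
      rcases hE1b with rfl | rfl | rfl | rfl | rfl <;>
      rcases hEMb with rfl | rfl | rfl | rfl | rfl | rfl | rfl <;> omega
  · have h53 : c3 = 4 := by rcases hc3b with rfl | rfl | rfl | rfl <;> omega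
    have h54 : c4 = 2 := by rcases hc4b with rfl | rfl | rfl | rfl <;> omega
    subst h53; subst h54
    rcases hD3b with rfl | rfl <;> rcases hD4b with rfl | rfl <;>
      rcases hE1b with rfl | rfl | rfl | rfl | rfl <;>
      rcases hEMb with rfl | rfl | rfl | rfl | rfl | rfl | rfl <;> omega
  · have h53 : c3 = 2 := by rcases hc3b with rfl | rfl | rfl | rfl <;> omega
    have h54 : c4 = 1 := by rcases hc4b with rfl | rfl | rfl | rfl <;> omega
    subst h53; subst h54
    rcases hD3b with rfl | rfl <;> rcases hD4b with rfl | rfl <;>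
      rcases hE1b with rfl | rfl | rfl | rfl | rfl <;>
      rcases hEMb with rfl | rfl | rfl | rfl | rfl | rfl | rfl <;> omega

/-- For every prime `p > 5` and every `n ≥ 1`, `0 ≤ 2s ≤ 5n`, the rational number
`5^{-2s}·(3/5)_n·(4/5)_n·(1/5)_{3n-s} / (s!·(5n-2s)!)` is a `p`-adic integer, where
`(a)_m = a(a+1)⋯(a+m-1)` is the ascending Pochhammer symbol. -/
theorem stmt16 (p : ℕ) (hp : p.Prime) (hp5 : 5 < p) (n s : ℕ)
    (hn : 1 ≤ n) (hs : 2 * s ≤ 5 * n) :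
    0 ≤ padicValRat p
      (((5 : ℚ) ^ (2 * s))⁻¹
        * (∏ i ∈ Finset.range n, ((3 : ℚ) / 5 + (i : ℚ)))
        * (∏ i ∈ Finset.range n, ((4 : ℚ) / 5 + (i : ℚ)))
        * (∏ i ∈ Finset.range (3 * n - s), ((1 : ℚ) / 5 + (i : ℚ)))
        / ((s.factorial : ℚ) * ((5 * n - 2 * s).factorial : ℚ))) := by
  haveI : Fact p.Prime := ⟨hp⟩
  have hp7 : 7 ≤ p := by
    have h2 := hp.two_le
    have h6 : p ≠ 6 := fun h => by rw [h] at hp; norm_num at hp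
    omega
  -- the integer products
  set A3 := ∏ i ∈ Finset.range n, (5*i + 3) with hA3
  set A4 := ∏ i ∈ Finset.range n, (5*i + 4) with hA4
  set A1 := ∏ i ∈ Finset.range (3*n - s), (5*i + 1) with hA1
  have hA3pos : 0 < A3 := Finset.prod_pos fun i _ => by omega
  have hA4pos : 0 < A4 := Finset.prod_pos fun i _ => by omega
  have hA1pos : 0 < A1 := Finset.prod_pos fun i _ => by omega
  have cast3 : ∏ i ∈ Finset.range n, ((3:ℚ)/5 + i) = (A3 : ℚ) / 5^n := by
    have hc : (A3 : ℚ) = ∏ i ∈ Finset.range n, (5*(i:ℚ) + 3) := by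
      rw [hA3]; push_cast; rfl
    calc ∏ i ∈ Finset.range n, ((3:ℚ)/5 + i)
        = ∏ i ∈ Finset.range n, ((5*(i:ℚ) + 3)/5) :=
          Finset.prod_congr rfl fun i _ => by ring
      _ = (∏ i ∈ Finset.range n, (5*(i:ℚ) + 3)) / (∏ _i ∈ Finset.range n, (5:ℚ)) :=
          Finset.prod_div_distrib _ _
      _ = (A3 : ℚ) / 5^n := by rw [Finset.prod_const, Finset.card_range, hc]
  have cast4 : ∏ i ∈ Finset.range n, ((4:ℚ)/5 + i) = (A4 : ℚ) / 5^n := by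
    have hc : (A4 : ℚ) = ∏ i ∈ Finset.range n, (5*(i:ℚ) + 4) := by
      rw [hA4]; push_cast; rfl
    calc ∏ i ∈ Finset.range n, ((4:ℚ)/5 + i)
        = ∏ i ∈ Finset.range n, ((5*(i:ℚ) + 4)/5) :=
          Finset.prod_congr rfl fun i _ => by ring
      _ = (∏ i ∈ Finset.range n, (5*(i:ℚ) + 4)) / (∏ _i ∈ Finset.range n, (5:ℚ)) :=
          Finset.prod_div_distrib _ _
      _ = (A4 : ℚ) / 5^n := by rw [Finset.prod_const, Finset.card_range, hc]
  have cast1 : ∏ i ∈ Finset.range (3*n - s), ((1:ℚ)/5 + i) = (A1 : ℚ) / 5^(3*n - s) := by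
    have hc : (A1 : ℚ) = ∏ i ∈ Finset.range (3*n - s), (5*(i:ℚ) + 1) := by
      rw [hA1]; push_cast; rfl
    calc ∏ i ∈ Finset.range (3*n - s), ((1:ℚ)/5 + i)
        = ∏ i ∈ Finset.range (3*n - s), ((5*(i:ℚ) + 1)/5) :=
          Finset.prod_congr rfl fun i _ => by ring
      _ = (∏ i ∈ Finset.range (3*n - s), (5*(i:ℚ) + 1))
            / (∏ _i ∈ Finset.range (3*n - s), (5:ℚ)) :=
          Finset.prod_div_distrib _ _
      _ = (A1 : ℚ) / 5^(3*n - s) := by rw [Finset.prod_const, Finset.card_range, hc]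
  have hfactpos : 0 < s.factorial * (5*n - 2*s).factorial :=
    Nat.mul_pos s.factorial_pos (5*n - 2*s).factorial_pos
  have hfactne : ((s.factorial * (5*n - 2*s).factorial : ℕ) : ℚ) ≠ 0 :=
    Nat.cast_ne_zero.mpr (by omega)
  have hDne : ((5:ℚ)^(2*s) * 5^n * 5^n * 5^(3*n - s)) ≠ 0 := by positivity
  have hAne : ((A3 * A4 * A1 : ℕ) : ℚ) ≠ 0 :=
    Nat.cast_ne_zero.mpr (Nat.mul_pos (Nat.mul_pos hA3pos hA4pos) hA1pos).ne'
  have hE : (((5 : ℚ) ^ (2 * s))⁻¹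
        * (∏ i ∈ Finset.range n, ((3 : ℚ) / 5 + (i : ℚ)))
        * (∏ i ∈ Finset.range n, ((4 : ℚ) / 5 + (i : ℚ)))
        * (∏ i ∈ Finset.range (3 * n - s), ((1 : ℚ) / 5 + (i : ℚ)))
        / ((s.factorial : ℚ) * ((5 * n - 2 * s).factorial : ℚ)))
      = ((A3 * A4 * A1 : ℕ) : ℚ)
        / (((5:ℚ)^(2*s) * 5^n * 5^n * 5^(3*n - s))
            * ((s.factorial * (5*n - 2*s).factorial : ℕ) : ℚ)) := by
    rw [cast3, cast4, cast1]
    push_cast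
    field_simp
    try ring
  rw [hE, padicValRat.div hAne (mul_ne_zero hDne hfactne),
    padicValRat.mul hDne hfactne]
  have h5val : padicValRat p (5:ℚ) = 0 := by
    have : ((5:ℕ):ℚ) = (5:ℚ) := by norm_num
    rw [← this, padicValRat.of_nat]
    norm_cast
    exact padicValNat.eq_zero_of_not_dvd (fun h => by
      have := Nat.le_of_dvd (by norm_num) h; omega)
  have hpow : ∀ k : ℕ, padicValRat p ((5:ℚ)^k) = 0 := fun k => by
    rw [padicValRat.pow (5:ℚ), h5val, mul_zero]
  have hDval : padicValRat p ((5:ℚ)^(2*s) * 5^n * 5^n * 5^(3*n - s)) = 0 := by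
    rw [padicValRat.mul (by positivity) (by positivity),
      padicValRat.mul (by positivity) (by positivity),
      padicValRat.mul (by positivity) (by positivity)]
    simp [hpow]
  rw [hDval, padicValRat.of_nat, padicValRat.of_nat]
  rw [zero_add, sub_nonneg, Nat.cast_le]
  -- now a pure ℕ statement
  set B := 15*n + 5 with hB
  have hlog : ∀ x : ℕ, x < B → Nat.log p x < B := by
    intro x hx
    rcases Nat.eq_zero_or_pos x with rfl | hx0
    · simpa using (by omega : 0 < B)
    · exact Nat.log_lt_of_lt_pow (by omega)
        (lt_of_lt_of_le hx (le_of_lt (Nat.lt_pow_self (n := B) hp.one_lt)))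
  rw [padicValNat.mul (Nat.factorial_ne_zero s) (Nat.factorial_ne_zero (5*n - 2*s)),
    padicValNat_factorial (hlog s (by omega)),
    padicValNat_factorial (hlog (5*n - 2*s) (by omega)),
    padicValNat.mul (Nat.mul_pos hA3pos hA4pos).ne' hA1pos.ne',
    padicValNat.mul hA3pos.ne' hA4pos.ne',
    val_prod p hp n 3 B (by norm_num) (by omega),
    val_prod p hp n 4 B (by norm_num) (by omega),
    val_prod p hp (3*n - s) 1 B (by norm_num) (by omega),
    ← Finset.sum_add_distrib, ← Finset.sum_add_distrib, ← Finset.sum_add_distrib]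
  refine Finset.sum_le_sum fun j hj => ?_
  simp only [Finset.mem_Ico] at hj
  have hq7 : 7 ≤ p ^ j := le_trans hp7 (Nat.le_self_pow (by omega) p)
  have hq5 : (p ^ j) % 5 ≠ 0 := by
    intro h
    have h5d : (5 : ℕ) ∣ p ^ j := by omega
    have := (Nat.prime_dvd_prime_iff_eq (by norm_num) hp).mp
      ((Nat.Prime.dvd_of_dvd_pow (by norm_num : Nat.Prime 5)) h5d)
    omega
  obtain ⟨a1, ha1, hd1⟩ := exists_res (p^j) 1 hq7 hq5 (by tauto)
  obtain ⟨a3, ha3, hd3⟩ := exists_res (p^j) 3 hq7 hq5 (by tauto)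
  obtain ⟨a4, ha4, hd4⟩ := exists_res (p^j) 4 hq7 hq5 (by tauto)
  calc s / p^j + (5*n - 2*s) / p^j
      ≤ (n + p^j - 1 - a3) / p^j + (n + p^j - 1 - a4) / p^j
          + (3*n - s + p^j - 1 - a1) / p^j :=
        core (p^j) n s a1 a3 a4 hq7 ha1 ha3 ha4 hd1 hd3 hd4 hn hs
    _ ≤ ((Finset.range n).filter (fun i => p ^ j ∣ 5*i + 3)).card
          + ((Finset.range n).filter (fun i => p ^ j ∣ 5*i + 4)).card
          + ((Finset.range (3*n - s)).filter (fun i => p ^ j ∣ 5*i + 1)).card := by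
        refine Nat.add_le_add (Nat.add_le_add ?_ ?_) ?_
        · exact count_lb n (p^j) 3 a3 (by omega) ha3 hd3
        · exact count_lb n (p^j) 4 a4 (by omega) ha4 hd4
        · exact count_lb (3*n - s) (p^j) 1 a1 (by omega) ha1 hd1
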